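/- Let μ and ν be the product-type measures μ = ⋯ × {α₂} × {α₁} × μ₀ × λ × λ × ⋯ and ν = ⋯ × {α₂} × {α₁} × ν₀ × λ × λ × ⋯ on the bi-infinite product J^ℤ of copies of [0,1], built from the same conditioned families {αₙ} and Lebesgue measures λ, differing only in the 0-th coordinate factor where ν₀ ≪ μ₀. Then ν ≪ μ and the Radon–Nikodym derivative satisfies (dν/dμ)(…, x₋₁, x₀, x₁, …) = (dν₀/dμ₀)(x₀) for μ-a.e. point. -/
import Mathlib


open MeasureTheory ProbabilityTheory

/-- **Radon–Nikodym derivative of product-type measures differing only in the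
0-th coordinate.** Model the bi-infinite product measures
`μ = ⋯ × {α₂} × {α₁} × μ₀ × λ × λ × ⋯` and
`ν = ⋯ × {α₂} × {α₁} × ν₀ × λ × λ × ⋯` on `J^ℤ` as follows: `κ` is the Markov
kernel assigning to each value `x₀` of the 0-th coordinate the conditional
joint distribution of all coordinates (built from the conditioned families
`{αₙ}` and the Lebesgue factors `λ`), so that the 0-th coordinate of a
`κ x₀`-random point equals `x₀` a.s., and `μ`, `ν` are obtained by mixing `κ`
against `μ₀` resp. `ν₀`. If `ν₀ ≪ μ₀`, then `ν ≪ μ` and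
`(dν/dμ)(…, x₋₁, x₀, x₁, …) = (dν₀/dμ₀)(x₀)` for μ-a.e. point. -/
theorem rnDeriv_product_type_measures
    (μ₀ ν₀ : Measure unitInterval) [IsFiniteMeasure μ₀] [IsFiniteMeasure ν₀]
    (hac : ν₀ ≪ μ₀)
    (κ : Kernel unitInterval (ℤ → unitInterval)) [IsMarkovKernel κ]
    (hκ : ∀ x₀ : unitInterval, ∀ᵐ z ∂(κ x₀), z 0 = x₀)
    (μ ν : Measure (ℤ → unitInterval))
    (hμ : μ = Measure.map Prod.snd (μ₀ ⊗ₘ κ))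
    (hν : ν = Measure.map Prod.snd (ν₀ ⊗ₘ κ)) :
    ν ≪ μ ∧ ν.rnDeriv μ =ᵐ[μ] fun z => ν₀.rnDeriv μ₀ (z 0) := by
  have hf : Measurable (ν₀.rnDeriv μ₀) := Measure.measurable_rnDeriv _ _
  have hg : Measurable (fun z : ℤ → unitInterval => ν₀.rnDeriv μ₀ (z 0)) :=
    hf.comp (measurable_pi_apply 0)
  have hμfin : IsFiniteMeasure μ := by
    rw [hμ]; infer_instance
  have key : ν = μ.withDensity (fun z => ν₀.rnDeriv μ₀ (z 0)) := by
    ext s hs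
    -- LHS : ν s = ∫⁻ x₀, κ x₀ s ∂ν₀ = ∫⁻ x₀, (dν₀/dμ₀) x₀ * κ x₀ s ∂μ₀
    have hLHS : ν s = ∫⁻ x₀, ν₀.rnDeriv μ₀ x₀ * κ x₀ s ∂μ₀ := by
      rw [hν, Measure.map_apply measurable_snd hs,
        Measure.compProd_apply (measurable_snd hs)]
      simp only [Set.preimage_preimage]
      have : ∀ x₀, κ x₀ ((fun z => (x₀, z).2) ⁻¹' s) = κ x₀ s := by
        intro x₀; congr
      simp_rw [this]
      conv_lhs => rw [← Measure.withDensity_rnDeriv_eq _ _ hac]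
      rw [lintegral_withDensity_eq_lintegral_mul _ hf
        ((Kernel.measurable_coe κ hs))]
      rfl
    -- RHS
    have hRHS : μ.withDensity (fun z => ν₀.rnDeriv μ₀ (z 0)) s
        = ∫⁻ x₀, ν₀.rnDeriv μ₀ x₀ * κ x₀ s ∂μ₀ := by
      rw [withDensity_apply _ hs, ← lintegral_indicator hs, hμ,
        lintegral_map (hg.indicator hs) measurable_snd,
        Measure.lintegral_compProd
          (show Measurable fun a : unitInterval × (ℤ → unitInterval) =>
              s.indicator (fun z => ν₀.rnDeriv μ₀ (z 0)) a.2 from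
            (hg.indicator hs).comp measurable_snd)]
      refine lintegral_congr_ae (ae_of_all _ fun x₀ => ?_)
      beta_reduce
      have : ∫⁻ z, s.indicator (fun z => ν₀.rnDeriv μ₀ (z 0)) ((x₀, z).2) ∂(κ x₀)
          = ∫⁻ z, s.indicator (fun _ => ν₀.rnDeriv μ₀ x₀) z ∂(κ x₀) := by
        refine lintegral_congr_ae ((hκ x₀).mono fun z hz => ?_)
        by_cases hzs : z ∈ s <;>
          simp [Set.indicator, hzs, hz]
      rw [this, lintegral_indicator_const hs]
    rw [hLHS, hRHS]
  refine ⟨?_, ?_⟩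
  · rw [key]; exact withDensity_absolutelyContinuous _ _
  · rw [key]; exact Measure.rnDeriv_withDensity μ hg
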